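/- Discrete divergence-free fields are skew gradients (Lemma 2.3, necessity): assume (SgnCancel): for every primary cell i and every vertex ν, the sum of t_{e,ν}·n_{e,i} over all edges e incident to both i and ν equals 0; (Euler): card C + card V = card E + 1; (KerSkew): the only dual scalar field ψ with ∇̃⊥_h ψ = 0 is ψ = 0; and (KerGrad): every primary scalar field φ with ∇_h φ = 0 is constant. Then every discrete vector field u with ∇_h·u = 0 can be written as u = ∇̃⊥_h ψ for a unique dual discrete scalar field ψ. -/

import Mathlib

open Finset

noncomputable section

/-- A combinatorial staggered mesh: primary cells `C`, dual cells (vertices) `V`,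
edges `E`, with areas, edge lengths, incidence relations and signs. -/
structure StagMesh (C V E : Type) [Fintype C] [Fintype V] [Fintype E]
    [DecidableEq C] [DecidableEq V] where
  /-- primary cell areas -/
  Ac : C → ℝ
  /-- dual cell areas -/
  Av : V → ℝ
  /-- primary edge lengths -/
  l : E → ℝ
  /-- dual edge lengths -/
  d : E → ℝ
  Ac_pos : ∀ i, 0 < Ac i
  Av_pos : ∀ ν, 0 < Av ν
  l_pos : ∀ e, 0 < l e
  d_pos : ∀ e, 0 < d e
  /-- primary cells incident to an edge -/
  EC : E → Finset C
  /-- vertices (dual cells) incident to an edge -/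
  EV : E → Finset V
  /-- sign `n_{e,i}` attached to an incident edge–cell pair -/
  n : E → C → ℝ
  /-- sign `t_{e,ν}` attached to an incident edge–vertex pair -/
  t : E → V → ℝ
  n_sign : ∀ e i, i ∈ EC e → n e i = 1 ∨ n e i = -1
  t_sign : ∀ e ν, ν ∈ EV e → t e ν = 1 ∨ t e ν = -1

namespace StagMesh

variable {C V E : Type} [Fintype C] [Fintype V] [Fintype E]
  [DecidableEq C] [DecidableEq V]

/-- diamond area `A_e = (1/2) l_e d_e` -/
def Ae (M : StagMesh C V E) (e : E) : ℝ := (1 / 2) * M.l e * M.d e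

/-- discrete gradient `[∇_h φ]_e = -(1/d_e) Σ_{i ~ e} n_{e,i} φ_i` -/
def grad (M : StagMesh C V E) (φ : C → ℝ) : E → ℝ :=
  fun e => -(1 / M.d e) * ∑ i ∈ M.EC e, M.n e i * φ i

/-- discrete skew gradient `[∇̃⊥_h ψ]_e = (1/l_e) Σ_{ν ~ e} t_{e,ν} ψ_ν` -/
def skewGrad (M : StagMesh C V E) (ψ : V → ℝ) : E → ℝ :=
  fun e => (1 / M.l e) * ∑ ν ∈ M.EV e, M.t e ν * ψ ν

/-- discrete divergence `[∇_h·u]_i = (1/A_i) Σ_{e ~ i} l_e n_{e,i} u_e` -/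
def dvg (M : StagMesh C V E) (u : E → ℝ) : C → ℝ :=
  fun i => (1 / M.Ac i) * ∑ e ∈ univ.filter (fun e => i ∈ M.EC e), M.l e * M.n e i * u e

/-- discrete curl `[∇̃_h×u]_ν = -(1/A_ν) Σ_{e ~ ν} d_e t_{e,ν} u_e` -/
def curl (M : StagMesh C V E) (u : E → ℝ) : V → ℝ :=
  fun ν => -(1 / M.Av ν) * ∑ e ∈ univ.filter (fun e => ν ∈ M.EV e), M.d e * M.t e ν * u e

/-- area-weighted inner product on primary scalar fields -/
def innerC (M : StagMesh C V E) (φ φ' : C → ℝ) : ℝ := ∑ i, M.Ac i * φ i * φ' i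

/-- area-weighted inner product on dual scalar fields -/
def innerV (M : StagMesh C V E) (ψ ψ' : V → ℝ) : ℝ := ∑ ν, M.Av ν * ψ ν * ψ' ν

/-- diamond-weighted inner product on discrete vector fields -/
def innerE (M : StagMesh C V E) (u u' : E → ℝ) : ℝ := ∑ e, M.Ae e * u e * u' e

/-- weighted `L²` norm on primary scalar fields -/
noncomputable def normC (M : StagMesh C V E) (φ : C → ℝ) : ℝ := Real.sqrt (M.innerC φ φ)

/-- weighted `L²` norm on dual scalar fields -/
noncomputable def normV (M : StagMesh C V E) (ψ : V → ℝ) : ℝ := Real.sqrt (M.innerV ψ ψ)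

/-- weighted `L²` norm on discrete vector fields -/
noncomputable def normE (M : StagMesh C V E) (u : E → ℝ) : ℝ := Real.sqrt (M.innerE u u)

/-- sign-cancellation condition: for every primary cell `i` and vertex `ν`,
`Σ_{e ~ i, e ~ ν} t_{e,ν} n_{e,i} = 0`. -/
def SgnCancel (M : StagMesh C V E) : Prop :=
  ∀ (i : C) (ν : V),
    ∑ e ∈ univ.filter (fun e => i ∈ M.EC e ∧ ν ∈ M.EV e), M.t e ν * M.n e i = 0

end StagMesh

open StagMesh

/-- discrete divergence-free fields are skew gradients: under the
standing mesh hypotheses, every discrete vector field `u` with `∇_h·u = 0` is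
`∇̃⊥_h ψ` for a unique dual scalar field `ψ`. -/
theorem divFree_is_skewGrad
    {C V E : Type} [Fintype C] [Fintype V] [Fintype E]
    [DecidableEq C] [DecidableEq V]
    (M : StagMesh C V E)
    (hsc : M.SgnCancel)
    (heuler : Fintype.card C + Fintype.card V = Fintype.card E + 1)
    (hks : ∀ ψ : V → ℝ, M.skewGrad ψ = 0 → ψ = 0)
    (hkg : ∀ φ : C → ℝ, M.grad φ = 0 → ∀ i j : C, φ i = φ j)
    (u : E → ℝ) (hu : M.dvg u = 0) :
    ∃! ψ : V → ℝ, u = M.skewGrad ψ := by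
  classical
  -- matrices representing the operators
  set Mg : Matrix E C ℝ :=
    fun e i => if i ∈ M.EC e then -(1 / M.d e) * M.n e i else 0 with hMg
  set Ms : Matrix E V ℝ :=
    fun e ν => if ν ∈ M.EV e then (1 / M.l e) * M.t e ν else 0 with hMs
  set Md : Matrix C E ℝ :=
    fun i e => if i ∈ M.EC e then (1 / M.Ac i) * (M.l e * M.n e i) else 0 with hMd
  have hgrad : ∀ φ : C → ℝ, M.grad φ = Mg.mulVec φ := by
    intro φ; funext e
    simp only [StagMesh.grad, Matrix.mulVec, dotProduct, hMg, ite_mul, zero_mul,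
      Finset.sum_ite_mem, Finset.univ_inter, Finset.mul_sum]
    exact Finset.sum_congr rfl fun i _ => by ring
  have hskew : ∀ ψ : V → ℝ, M.skewGrad ψ = Ms.mulVec ψ := by
    intro ψ; funext e
    simp only [StagMesh.skewGrad, Matrix.mulVec, dotProduct, hMs, ite_mul, zero_mul,
      Finset.sum_ite_mem, Finset.univ_inter, Finset.mul_sum]
    exact Finset.sum_congr rfl fun ν _ => by ring
  have hdvg : ∀ w : E → ℝ, M.dvg w = Md.mulVec w := by
    intro w; funext i
    simp only [StagMesh.dvg, Matrix.mulVec, dotProduct, hMd, ite_mul, zero_mul,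
      Finset.sum_filter, Finset.mul_sum]
    refine Finset.sum_congr rfl fun e _ => ?_
    split <;> ring
  -- factorization of the divergence matrix through the transpose of the gradient
  have hfac : Md = Matrix.diagonal (fun i => 1 / M.Ac i) * Mg.transpose *
      Matrix.diagonal (fun e => -(M.l e * M.d e)) := by
    ext i e
    simp only [Matrix.mul_diagonal, Matrix.diagonal_mul, Matrix.transpose_apply, Matrix.transpose, Matrix.of_apply, hMd, hMg]
    split
    · have hd : M.d e ≠ 0 := (M.d_pos e).ne'
      have h1 : 1 / M.d e * M.d e = 1 := one_div_mul_cancel hd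
      linear_combination (-(1 / M.Ac i * (M.l e * M.n e i))) * h1
    · simp
  have hdetC : IsUnit (Matrix.diagonal (fun i => 1 / M.Ac i)).det := by
    rw [Matrix.det_diagonal]
    exact (Finset.prod_ne_zero_iff.2 fun i _ =>
      one_div_ne_zero (M.Ac_pos i).ne').isUnit
  have hdetE : IsUnit (Matrix.diagonal (fun e : E => -(M.l e * M.d e))).det := by
    rw [Matrix.det_diagonal]
    exact (Finset.prod_ne_zero_iff.2 fun e _ =>
      neg_ne_zero.2 (mul_pos (M.l_pos e) (M.d_pos e)).ne').isUnit
  have hrank : Md.rank = Mg.rank := by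
    rw [hfac, Matrix.rank_mul_eq_left_of_isUnit_det _ _ hdetE,
      Matrix.rank_mul_eq_right_of_isUnit_det _ _ hdetC, Matrix.rank_transpose _]
  -- kernel of the gradient has dimension at most 1
  have hkerG : LinearMap.ker Mg.mulVecLin ≤
      Submodule.span ℝ {(fun _ => (1 : ℝ) : C → ℝ)} := by
    intro φ hφ
    have hφ0 : M.grad φ = 0 := by
      rw [hgrad]; exact hφ
    rcases isEmpty_or_nonempty C with hC | hC
    · have : φ = 0 := funext fun i => absurd (Nonempty.intro i) (not_nonempty_iff.2 hC)
      rw [this]; exact Submodule.zero_mem _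
    · obtain ⟨j⟩ := hC
      have : φ = φ j • (fun _ => (1 : ℝ)) := funext fun i => by
        simpa using hkg φ hφ0 i j
      rw [this]
      exact Submodule.smul_mem _ _ (Submodule.mem_span_singleton_self _)
  have hkerG1 : Module.finrank ℝ (LinearMap.ker Mg.mulVecLin) ≤ 1 := by
    calc Module.finrank ℝ (LinearMap.ker Mg.mulVecLin)
        ≤ Module.finrank ℝ (Submodule.span ℝ {(fun _ => (1 : ℝ) : C → ℝ)}) :=
          Submodule.finrank_mono hkerG
      _ ≤ 1 := by
          by_cases h : (fun _ => (1 : ℝ) : C → ℝ) = 0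
          · rw [h, Submodule.span_zero_singleton]
            simp
          · exact le_of_eq (finrank_span_singleton h)
  -- skew gradient is injective
  have hSker : LinearMap.ker Ms.mulVecLin = ⊥ := by
    rw [LinearMap.ker_eq_bot']
    intro ψ hψ
    exact hks ψ (by rw [hskew]; exact hψ)
  -- range of skew gradient is contained in kernel of divergence
  have hrange : LinearMap.range Ms.mulVecLin ≤ LinearMap.ker Md.mulVecLin := by
    rintro _ ⟨ψ, rfl⟩
    rw [LinearMap.mem_ker]
    have : M.dvg (M.skewGrad ψ) = 0 := by
      funext i
      simp only [StagMesh.dvg, StagMesh.skewGrad, Pi.zero_apply]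
      rw [mul_eq_zero]
      right
      have step : ∀ e ∈ Finset.univ.filter (fun e => i ∈ M.EC e),
          M.l e * M.n e i * ((1 / M.l e) * ∑ ν ∈ M.EV e, M.t e ν * ψ ν)
          = ∑ ν, (if ν ∈ M.EV e then M.t e ν * M.n e i * ψ ν else 0) := by
        intro e _
        rw [Finset.sum_ite_mem, Finset.univ_inter, Finset.mul_sum, Finset.mul_sum]
        refine Finset.sum_congr rfl fun ν _ => ?_
        have hl : M.l e ≠ 0 := (M.l_pos e).ne'
        field_simp
      rw [Finset.sum_congr rfl step, Finset.sum_comm]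
      refine Finset.sum_eq_zero fun ν _ => ?_
      have := hsc i ν
      rw [Finset.sum_filter] at this ⊢
      calc ∑ e, (if i ∈ M.EC e then
              (if ν ∈ M.EV e then M.t e ν * M.n e i * ψ ν else 0) else 0)
          = (∑ e, if i ∈ M.EC e ∧ ν ∈ M.EV e then M.t e ν * M.n e i else 0) * ψ ν := by
            rw [Finset.sum_mul]
            refine Finset.sum_congr rfl fun e _ => ?_
            by_cases h1 : i ∈ M.EC e <;> by_cases h2 : ν ∈ M.EV e <;> simp [h1, h2]
        _ = 0 := by rw [this, zero_mul]
    rw [hdvg, hskew] at this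
    exact this
  -- dimension counting
  have hV : Module.finrank ℝ (LinearMap.range Ms.mulVecLin) = Fintype.card V := by
    have := LinearMap.finrank_range_add_finrank_ker Ms.mulVecLin
    rw [hSker, finrank_bot, Module.finrank_pi] at this
    omega
  have hMdrn := LinearMap.finrank_range_add_finrank_ker Md.mulVecLin
  rw [Module.finrank_pi] at hMdrn
  have hMgrn := LinearMap.finrank_range_add_finrank_ker Mg.mulVecLin
  rw [Module.finrank_pi] at hMgrn
  have hVK : Fintype.card V ≤ Module.finrank ℝ (LinearMap.ker Md.mulVecLin) := by
    rw [← hV]; exact Submodule.finrank_mono hrange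
  have hKV : Module.finrank ℝ (LinearMap.ker Md.mulVecLin) ≤ Fintype.card V := by
    have hr : Module.finrank ℝ (LinearMap.range Md.mulVecLin) = Mg.rank := hrank
    have hr2 : Mg.rank = Module.finrank ℝ (LinearMap.range Mg.mulVecLin) := rfl
    omega
  have heq : LinearMap.range Ms.mulVecLin = LinearMap.ker Md.mulVecLin :=
    Submodule.eq_of_le_of_finrank_le hrange (by rw [hV]; exact hKV)
  have humem : u ∈ LinearMap.ker Md.mulVecLin := by
    rw [LinearMap.mem_ker]
    show Md.mulVec u = 0
    rw [← hdvg, hu]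
  rw [← heq] at humem
  obtain ⟨ψ, hψ⟩ := humem
  refine ⟨ψ, ?_, ?_⟩
  · show u = M.skewGrad ψ
    rw [hskew]; exact hψ.symm
  intro ψ' hψ'
  have hψ'' : u = M.skewGrad ψ' := hψ'
  have : M.skewGrad (ψ' - ψ) = 0 := by
    funext e
    have h1 : Ms.mulVec (ψ' - ψ) = Ms.mulVec ψ' - Ms.mulVec ψ := by
      simp [Matrix.mulVec_sub]
    rw [hskew, h1, ← hskew, ← hskew, ← hψ'']
    have : M.skewGrad ψ = u := by rw [hskew]; exact hψ
    rw [this]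
    simp
  have := hks _ this
  have : ψ' - ψ = 0 := this
  funext ν
  have := congrFun this ν
  simpa [sub_eq_zero] using this
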